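/- For every n ≥ 8, the arrangement A_n can be transformed into the arrangement K'_{⌊n/2⌋,n} in exactly (3n² − 34n + 112)/8 LRE moves when n is even, and in exactly (3n² − 40n + 149)/8 LRE moves when n is odd; that is, there exist that many generators g_1, g_2, … ∈ G with A_n ∘ g_1 ∘ ⋯ = K'_{⌊n/2⌋,n}. -/

import Mathlib

namespace AtoKprimeAux

variable {n : ℕ}

/-- One "run": `σ^a τ (σ⁻¹ τ)^a`, as a list of generators. -/
def runL (σ τ : Equiv.Perm (Fin n)) (a : ℕ) : List (Equiv.Perm (Fin n)) :=
  List.replicate a σ ++ [τ] ++ (List.replicate a [σ⁻¹, τ]).flatten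

/-- Concatenation of runs `0, 1, …, j-1`. -/
def WL (σ τ : Equiv.Perm (Fin n)) (j : ℕ) : List (Equiv.Perm (Fin n)) :=
  ((List.range j).map (runL σ τ)).flatten

lemma runL_succ (σ τ : Equiv.Perm (Fin n)) (a : ℕ) :
    runL σ τ (a + 1) = σ :: (runL σ τ a ++ [σ⁻¹, τ]) := by
  unfold runL
  rw [List.replicate_succ' (n := a) (a := [σ⁻¹, τ]), List.flatten_append, List.replicate_succ]
  simp

lemma runL_mem (σ τ : Equiv.Perm (Fin n)) (a : ℕ) :
    ∀ g ∈ runL σ τ a, g = σ ∨ g = σ⁻¹ ∨ g = τ := by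
  induction a with
  | zero => simp [runL]
  | succ a ih =>
    rw [runL_succ]
    intro g hg
    simp only [List.mem_cons, List.mem_append] at hg
    rcases hg with h | h | h
    · exact Or.inl h
    · exact ih g h
    · simp at h; rcases h with h | h
      · exact Or.inr (Or.inl h)
      · exact Or.inr (Or.inr h)

lemma runL_length (σ τ : Equiv.Perm (Fin n)) (a : ℕ) :
    (runL σ τ a).length = 3 * a + 1 := by
  induction a with
  | zero => simp [runL]
  | succ a ih => rw [runL_succ]; simp at ih ⊢; omega

lemma WL_succ (σ τ : Equiv.Perm (Fin n)) (j : ℕ) :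
    WL σ τ (j + 1) = WL σ τ j ++ runL σ τ j := by
  simp [WL, List.range_succ]

lemma WL_mem (σ τ : Equiv.Perm (Fin n)) (j : ℕ) :
    ∀ g ∈ WL σ τ j, g = σ ∨ g = σ⁻¹ ∨ g = τ := by
  induction j with
  | zero => simp [WL]
  | succ j ih =>
    rw [WL_succ]
    intro g hg
    rcases List.mem_append.1 hg with h | h
    · exact ih g h
    · exact runL_mem σ τ j g h

lemma WL_length (σ τ : Equiv.Perm (Fin n)) (j : ℕ) :
    2 * (WL σ τ j).length + j = 3 * j ^ 2 := by
  induction j with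
  | zero => simp [WL]
  | succ j ih =>
    rw [WL_succ, List.length_append, runL_length]
    ring_nf at ih ⊢
    omega

end AtoKprimeAux

set_option maxHeartbeats 1000000 in
open AtoKprimeAux in
theorem A_to_Kprime (n : ℕ) (hn : 8 ≤ n)
    (σ τ A K' : Equiv.Perm (Fin n))
    (hσ : ∀ i : Fin n, (σ i : ℕ) = ((i : ℕ) + 1) % n)
    (hτ : ∀ i : Fin n, (τ i : ℕ) =
      if (i : ℕ) = 0 then 1 else if (i : ℕ) = 1 then 0 else (i : ℕ))
    (hA : ∀ i : Fin n, (A i : ℕ) =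
      if (i : ℕ) = n - (n + 1) / 2 - 2 then n - 1
      else if (i : ℕ) = n - 1 then (n + 1) / 2
      else n - 2 - (i : ℕ))
    (hK' : ∀ i : Fin n, (K' i : ℕ) =
      if (i : ℕ) < n - n / 2 then n - n / 2 - 1 - (i : ℕ) else (i : ℕ)) :
    ∃ gs : List (Equiv.Perm (Fin n)),
      (n % 2 = 0 → 8 * gs.length + 34 * n = 3 * n ^ 2 + 112) ∧
      (n % 2 = 1 → 8 * gs.length + 40 * n = 3 * n ^ 2 + 149) ∧
      (∀ g ∈ gs, g = σ ∨ g = σ⁻¹ ∨ g = τ) ∧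
      A * gs.prod = K' := by
  -- basic value facts
  have hlt : ∀ i : Fin n, (i : ℕ) < n := fun i => i.isLt
  -- clean formula for σ
  have hσ' : ∀ i : Fin n, (σ i : ℕ) = if (i : ℕ) = n - 1 then 0 else (i : ℕ) + 1 := by
    intro i
    rw [hσ i]
    have := hlt i
    rcases eq_or_ne (i : ℕ) (n - 1) with h | h
    · rw [if_pos h, h]
      have e : n - 1 + 1 = n := by omega
      rw [e, Nat.mod_self]
    · rw [if_neg h, Nat.mod_eq_of_lt (by omega)]
  -- formula for σ⁻¹
  have hσi : ∀ i : Fin n, ((σ⁻¹ i : Fin n) : ℕ) = if (i : ℕ) = 0 then n - 1 else (i : ℕ) - 1 := by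
    intro i
    have h1 : σ (σ⁻¹ i) = i := Equiv.apply_symm_apply σ i
    have h2 := hσ' (σ⁻¹ i)
    have h3 : ((σ (σ⁻¹ i) : Fin n) : ℕ) = (i : ℕ) := by rw [h1]
    rw [h2] at h3
    have h4 := hlt (σ⁻¹ i)
    have h5 := hlt i
    split_ifs at h3 ⊢ <;> omega
  -- formula for powers of σ
  have hσk : ∀ k : ℕ, k ≤ n → ∀ i : Fin n,
      ((σ ^ k) i : ℕ) = if (i : ℕ) + k < n then (i : ℕ) + k else (i : ℕ) + k - n := by
    intro k
    induction k with
    | zero =>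
      intro _ i
      have := hlt i
      simp only [pow_zero, Equiv.Perm.one_apply]
      split_ifs <;> omega
    | succ k ih =>
      intro hk i
      have hk' : k ≤ n := by omega
      have : (σ ^ (k + 1)) i = (σ ^ k) (σ i) := by
        rw [pow_succ, Equiv.Perm.mul_apply]
      rw [this, ih hk' (σ i), hσ' i]
      have := hlt i
      split_ifs <;> omega
  -- product of a run
  have hrun : ∀ a : ℕ, a + 1 < n → ∀ i : Fin n,
      (((runL σ τ a).prod) i : ℕ) =
        if (i : ℕ) = 0 then a + 1 else if (i : ℕ) ≤ a + 1 then (i : ℕ) - 1 else (i : ℕ) := by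
    intro a
    induction a with
    | zero =>
      intro _ i
      have : (runL σ τ 0).prod = τ := by simp [runL]
      rw [this, hτ i]
      have := hlt i
      split_ifs <;> omega
    | succ a ih =>
      intro ha i
      have ha' : a + 1 < n := by omega
      have hp : (runL σ τ (a + 1)).prod = σ * ((runL σ τ a).prod * (σ⁻¹ * τ)) := by
        rw [runL_succ]
        simp [List.prod_append, mul_assoc]
      rw [hp]
      have e1 : (σ * ((runL σ τ a).prod * (σ⁻¹ * τ))) i
          = σ (((runL σ τ a).prod) (σ⁻¹ (τ i))) := by
        simp [Equiv.Perm.mul_apply]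
      rw [e1]
      have v1 := hτ i
      have v2 := hσi (τ i)
      have v3 := ih ha' (σ⁻¹ (τ i))
      have v4 := hσ' (((runL σ τ a).prod) (σ⁻¹ (τ i)))
      have w1 := hlt i
      have w2 := hlt (τ i)
      have w3 := hlt (σ⁻¹ (τ i))
      have w4 := hlt (((runL σ τ a).prod) (σ⁻¹ (τ i)))
      rw [v4]
      split_ifs at v1 v2 v3 ⊢ <;> omega
  -- product of prefix of runs: reversal of prefix of length j+1 (for j ≥ 1), i.e.
  -- (WL j).prod sends i ↦ j - i for i ≤ j, identity above.
  have hW : ∀ j : ℕ, j < n → ∀ i : Fin n,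
      (((WL σ τ j).prod) i : ℕ) = if (i : ℕ) ≤ j then j - (i : ℕ) else (i : ℕ) := by
    intro j
    induction j with
    | zero =>
      intro _ i
      have : (WL σ τ 0).prod = 1 := by simp [WL]
      rw [this, Equiv.Perm.one_apply]
      have := hlt i
      split_ifs <;> omega
    | succ j ih =>
      intro hj i
      have hj' : j < n := by omega
      have hp : (WL σ τ (j + 1)).prod = (WL σ τ j).prod * (runL σ τ j).prod := by
        rw [WL_succ, List.prod_append]
      rw [hp, Equiv.Perm.mul_apply]
      have v1 := hrun j (by omega) i
      have v2 := ih hj' (((runL σ τ j).prod) i)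
      have w1 := hlt i
      have w2 := hlt (((runL σ τ j).prod) i)
      rw [v2]
      split_ifs at v1 ⊢ <;> omega
  -- the word
  set m : ℕ := n / 2 - 1 with hm
  set L : ℕ := n / 2 - 2 with hL
  refine ⟨WL σ τ (L - 1) ++ List.replicate m σ, ?_, ?_, ?_, ?_⟩
  · -- even count
    intro hpar
    have hlen := WL_length σ τ (L - 1)
    rw [List.length_append, List.length_replicate]
    set w := (WL σ τ (L - 1)).length with hw
    have hp3 : L - 1 = n / 2 - 3 := by omega
    have hq : n = 2 * (n / 2 - 3) + 6 := by omega
    set p : ℕ := n / 2 - 3 with hpdef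
    have hmn : m = p + 2 := by omega
    rw [hp3] at hlen
    rw [hmn, hq]
    nlinarith [hlen]
  · -- odd count
    intro hpar
    have hlen := WL_length σ τ (L - 1)
    rw [List.length_append, List.length_replicate]
    set w := (WL σ τ (L - 1)).length with hw
    have hp3 : L - 1 = n / 2 - 3 := by omega
    have hq : n = 2 * (n / 2 - 3) + 7 := by omega
    set p : ℕ := n / 2 - 3 with hpdef
    have hmn : m = p + 2 := by omega
    rw [hp3] at hlen
    rw [hmn, hq]
    nlinarith [hlen]
  · -- membership
    intro g hg
    rcases List.mem_append.1 hg with h | h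
    · exact WL_mem σ τ (L - 1) g h
    · exact Or.inl (List.eq_of_mem_replicate h)
  · -- product
    have hprod : (WL σ τ (L - 1) ++ List.replicate m σ).prod
        = (WL σ τ (L - 1)).prod * σ ^ m := by
      rw [List.prod_append, List.prod_replicate]
    apply Equiv.ext
    intro i
    apply Fin.ext
    rw [hprod, Equiv.Perm.mul_apply, Equiv.Perm.mul_apply]
    have v1 := hσk m (by omega) i
    generalize hx1 : (σ ^ m) i = x1 at v1 ⊢
    have v2 := hW (L - 1) (by omega) x1
    generalize hx2 : ((WL σ τ (L - 1)).prod) x1 = x2 at v2 ⊢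
    rw [hA x2, hK' i]
    have w1 := hlt i
    have w2 := hlt x1
    have w3 := hlt x2
    clear hx1 hx2 hprod hσ hτ hA hK' hσ' hσi hσk hrun hW
    split_ifs at v1 v2 ⊢ <;> omega
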